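/- The map induced by the Newton map (in (z,w)-coordinates) on the exceptional divisor of the blow-up at (0,0), computed in the chart m = z/w as the limit as w → 0 of the quotient of coordinates, is s(m) = m²/(1+Bm); precisely, for fixed m with 1+Bm ≠ 0, lim_{w→0} N̂₁(mw, w)/N̂₂(mw, w) = m²/(1+Bm), where N̂(z,w) = (z², (w²+(Bw−Bw²)z−w²z²)/(1+(B−Bw)z+(Bw²+B−1−2Bw)z²)). -/
import Mathlib


/-- The map induced on the exceptional divisor of the blow-up at (0,0) (in (z,w)
coordinates, chart m = z/w) is s(m) = m²/(1+Bm):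
for 1+Bm ≠ 0, lim_{w→0} N̂₁(mw,w)/N̂₂(mw,w) = m²/(1+Bm). -/
theorem exceptional_divisor_map_zw (B m : ℂ) (hm : 1 + B * m ≠ 0) :
    Filter.Tendsto
      (fun w : ℂ =>
        (m * w) ^ 2 /
          ((w ^ 2 + (B * w - B * w ^ 2) * (m * w) - w ^ 2 * (m * w) ^ 2) /
            (1 + (B - B * w) * (m * w) + (B * w ^ 2 + B - 1 - 2 * B * w) * (m * w) ^ 2)))
      (nhdsWithin 0 {0}ᶜ) (nhds (m ^ 2 / (1 + B * m))) := by
  set g : ℂ → ℂ := fun w =>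
      m ^ 2 * (1 + (B - B * w) * (m * w) + (B * w ^ 2 + B - 1 - 2 * B * w) * (m * w) ^ 2) /
        (1 + B * m - B * m * w - m ^ 2 * w ^ 2) with hg
  have hgt : Filter.Tendsto g (nhdsWithin 0 {0}ᶜ) (nhds (m ^ 2 / (1 + B * m))) := by
    have hc : ContinuousAt g 0 := by
      apply ContinuousAt.div
      · fun_prop
      · fun_prop
      · simpa using hm
    have h0 : g 0 = m ^ 2 / (1 + B * m) := by simp [hg]
    exact h0 ▸ hc.continuousWithinAt.tendsto
  refine hgt.congr' ?_
  filter_upwards [self_mem_nhdsWithin] with w hw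
  have hw0 : w ≠ 0 := hw
  rw [hg]
  simp only
  rw [div_div_eq_mul_div]
  have hN : (w ^ 2 + (B * w - B * w ^ 2) * (m * w) - w ^ 2 * (m * w) ^ 2)
      = w ^ 2 * (1 + B * m - B * m * w - m ^ 2 * w ^ 2) := by ring
  have hM : (m * w) ^ 2 *
      (1 + (B - B * w) * (m * w) + (B * w ^ 2 + B - 1 - 2 * B * w) * (m * w) ^ 2)
      = w ^ 2 * (m ^ 2 * (1 + (B - B * w) * (m * w) + (B * w ^ 2 + B - 1 - 2 * B * w) * (m * w) ^ 2)) := by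
    ring
  rw [hN, hM, mul_div_mul_left _ _ (pow_ne_zero 2 hw0)]
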